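/- arXiv:2602.17417 — 4 statements merged into one kernel-verified Lean document; each statement's English description precedes it below -/
import Mathlib

section
/- Let D_0 be a divisor on X and let {f_1, ..., f_ℓ} be a k-basis of the Riemann–Roch space L(D_0), where ℓ = ℓ(D_0); this choice of basis defines an isomorphism L(D_0) ≅ k^ℓ. For each closed point x ∈ X fix a nonzero function g_x ∈ k(X), a uniformizer q_x at x, and functions u_{x,1}, ..., u_{x,deg(x)} ∈ Ô_{X,x} whose residue classes form a k-basis of k(x). For each 1 ≤ i ≤ ℓ write the unique expansion f_i g_x = Σ_{j≥0} (a_{x,i,j,1} u_{x,1} + ... + a_{x,i,j,deg(x)} u_{x,deg(x)}) q_x^{j − v_x(D_0) + v_x(g_x)} with all coefficients a_{x,i,j,l} ∈ k, and set a_{x,i,j} = (a_{x,i,j,1}, ..., a_{x,i,j,deg(x)}) ∈ k^{deg(x)}. Then for every effective divisor D = m_{x_1} x_1 + ... + m_{x_n} x_n with distinct closed points x_1, ..., x_n, the isomorphism L(D_0) ≅ k^ℓ identifies the subspace L(D_0 − D) with the nullspace of the ℓ × deg(D) matrix A whose i-th row is the concatenation of the vectors a_{x_1,i,0}, ..., a_{x_1,i,m_{x_1}−1},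 ..., a_{x_n,i,0}, ..., a_{x_n,i,m_{x_n}−1}. In particular ℓ(D_0 − D) = ℓ(D_0) − rank(A). -/
/-- An abstract model of a smooth, projective, geometrically integral curve over
a field `k`, recorded via its function field `K`, its type `Pt` of closed points
together with their degrees and normalized discrete valuations, and its
Riemann–Roch spaces. -/
structure AbstractCurve (k K : Type*) [Field k] [Field K] [Algebra k K] where
  /-- the closed points of the curve -/
  Pt : Type*
  /-- the degree `[k(x) : k]` of a closed point -/
  deg : Pt → ℕ
  deg_pos : ∀ x, 0 < deg x
  /-- the normalized discrete valuation at a closed point (junk value at `0`) -/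
  v : Pt → K → ℤ
  v_mul : ∀ x (f g : K), f ≠ 0 → g ≠ 0 → v x (f * g) = v x f + v x g
  v_add : ∀ x (f g : K), f ≠ 0 → g ≠ 0 → f + g ≠ 0 → min (v x f) (v x g) ≤ v x (f + g)
  v_const : ∀ x (c : k), c ≠ 0 → v x (algebraMap k K c) = 0
  v_surj : ∀ x, ∃ f : K, f ≠ 0 ∧ v x f = 1
  v_finite : ∀ f : K, f ≠ 0 → {x | v x f ≠ 0}.Finite
  /-- every principal divisor has degree zero -/
  deg_principal : ∀ f : K, f ≠ 0 → ∑ᶠ x, v x f * (deg x : ℤ) = 0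
  /-- the field of constants is exactly `k` -/
  constants : ∀ f : K, f ≠ 0 → (∀ x, 0 ≤ v x f) → ∃ c : k, f = algebraMap k K c
  /-- the Riemann–Roch space of a divisor, as a `k`-subspace of `K` -/
  RR : (Pt →₀ ℤ) → Submodule k K
  mem_RR : ∀ (D : Pt →₀ ℤ) (f : K), f ∈ RR D ↔ f = 0 ∨ ∀ x, -(D x) ≤ v x f

variable {k K : Type*} [Field k] [Field K] [Algebra k K]

/-- The degree of a divisor. -/
noncomputable def AbstractCurve.degDiv (C : AbstractCurve k K) (D : C.Pt →₀ ℤ) : ℤ :=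
  D.sum fun x n => n * (C.deg x : ℤ)

/-- The degree of the pole divisor of a function (the degree of the corresponding
map to `P¹` when the function is nonconstant). -/
noncomputable def AbstractCurve.poleDegree (C : AbstractCurve k K) (f : K) : ℤ :=
  ∑ᶠ x, max 0 (-(C.v x f)) * (C.deg x : ℤ)

namespace AbstractCurve

variable (C : AbstractCurve k K) (x : C.Pt)

lemma v_one : C.v x 1 = 0 := by
  have := C.v_const x 1 one_ne_zero
  simpa using this

lemma v_inv {f : K} (hf : f ≠ 0) : C.v x f⁻¹ = -C.v x f := by
  have h := C.v_mul x f f⁻¹ hf (inv_ne_zero hf)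
  rw [mul_inv_cancel₀ hf, C.v_one] at h
  omega

lemma v_pow {f : K} (hf : f ≠ 0) (N : ℕ) : C.v x (f ^ N) = N * C.v x f := by
  induction N with
  | zero => simpa using C.v_one x
  | succ N ih =>
    rw [pow_succ, C.v_mul x _ _ (pow_ne_zero _ hf) hf, ih]
    push_cast; ring

lemma v_zpow {f : K} (hf : f ≠ 0) (e : ℤ) : C.v x (f ^ e) = e * C.v x f := by
  cases e with
  | ofNat N => rw [Int.ofNat_eq_coe, zpow_natCast, C.v_pow x hf]
  | negSucc N =>
    rw [zpow_negSucc, C.v_inv x (pow_ne_zero _ hf), C.v_pow x hf, Int.negSucc_eq]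
    push_cast; ring

lemma P_add {N : ℤ} {f g : K} (hf : f = 0 ∨ N ≤ C.v x f) (hg : g = 0 ∨ N ≤ C.v x g) :
    f + g = 0 ∨ N ≤ C.v x (f + g) := by
  by_cases hf0 : f = 0
  · subst hf0; simpa using hg
  by_cases hg0 : g = 0
  · subst hg0; simpa using hf
  by_cases h : f + g = 0
  · exact Or.inl h
  · right
    have := C.v_add x f g hf0 hg0 h
    have h1 := hf.resolve_left hf0
    have h2 := hg.resolve_left hg0
    omega

lemma P_smul {N : ℤ} (c : k) {f : K} (hf : f = 0 ∨ N ≤ C.v x f) :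
    algebraMap k K c * f = 0 ∨ N ≤ C.v x (algebraMap k K c * f) := by
  by_cases hc : c = 0
  · left; simp [hc]
  by_cases hf0 : f = 0
  · left; simp [hf0]
  · right
    rw [C.v_mul x _ _ ((map_ne_zero _).2 hc) hf0, C.v_const x c hc, zero_add]
    exact hf.resolve_left hf0

lemma P_neg {N : ℤ} {f : K} (hf : f = 0 ∨ N ≤ C.v x f) :
    -f = 0 ∨ N ≤ C.v x (-f) := by
  have := C.P_smul x (-1 : k) hf
  rwa [map_neg, map_one, neg_one_mul] at this

lemma P_sub {N : ℤ} {f g : K} (hf : f = 0 ∨ N ≤ C.v x f) (hg : g = 0 ∨ N ≤ C.v x g) :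
    f - g = 0 ∨ N ≤ C.v x (f - g) := by
  rw [sub_eq_add_neg]
  exact C.P_add x hf (C.P_neg x hg)

lemma P_sum {N : ℤ} {ι : Type*} (s : Finset ι) (h : ι → K)
    (H : ∀ i ∈ s, h i = 0 ∨ N ≤ C.v x (h i)) :
    (∑ i ∈ s, h i) = 0 ∨ N ≤ C.v x (∑ i ∈ s, h i) := by
  classical
  induction s using Finset.cons_induction with
  | empty => left; simp
  | cons a s ha ih =>
    rw [Finset.sum_cons]
    exact C.P_add x (H a (Finset.mem_cons_self a s))
      (ih fun i hi => H i (Finset.mem_cons_of_mem hi))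

end AbstractCurve

/-- **Theorem 3.1 of the paper.** Let `D₀` be a divisor on `X`
and let `f_1, ..., f_L` be a `k`-basis of `L(D₀)`, where `L = ℓ(D₀)` (the basis
`b` identifies `L(D₀)` with `k^L`). For each closed point `x` fix a nonzero
function `g x ∈ k(X)`, a uniformizer `q x` at `x`, and functions
`u x 1, ..., u x (deg x)`, integral at `x`, whose residue classes form a
`k`-basis of the residue field `k(x)` (expressed valuatively by `hu_indep` and
`hu_span`). For each `i` write the unique expansion
`f_i · g x = Σ_{j ≥ 0} (Σ_l a x i j l · u x l) · (q x)^(j − v_x(D₀) + v_x(g x))`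
with all coefficients `a x i j l ∈ k` (expressed by the condition `ha` that
every truncation of the series approximates `f_i · g x` to the stated order).

Then for every effective divisor `D = m₁ x₁ + ... + m_n x_n` with distinct
closed points `x j` and multiplicities `m j ≥ 1`, the identification of
`L(D₀)` with `k^L` identifies the subspace `L(D₀ − D)` with the nullspace of
the `L × deg D` matrix `A` whose `i`-th row is the concatenation of the vectors
`a (x j) i r` for `j = 1, ..., n` and `r = 0, ..., m j − 1`. In particular
`ℓ(D₀ − D) = ℓ(D₀) − rank A`. -/
theorem statement0 (C : AbstractCurve k K)
    (D₀ : C.Pt →₀ ℤ) (L : ℕ) (hL : L = Module.finrank k (C.RR D₀))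
    (b : Module.Basis (Fin L) k (C.RR D₀))
    (g : C.Pt → K) (hg : ∀ x, g x ≠ 0)
    (q : C.Pt → K) (hq : ∀ x, q x ≠ 0 ∧ C.v x (q x) = 1)
    (u : (x : C.Pt) → Fin (C.deg x) → K)
    (hu_int : ∀ x l, u x l ≠ 0 ∧ 0 ≤ C.v x (u x l))
    (hu_indep : ∀ x (c : Fin (C.deg x) → k),
      ((∑ l, algebraMap k K (c l) * u x l) = 0 ∨
        0 < C.v x (∑ l, algebraMap k K (c l) * u x l)) →
      ∀ l, c l = 0)
    (hu_span : ∀ x (w : K), w ≠ 0 → 0 ≤ C.v x w →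
      ∃ c : Fin (C.deg x) → k,
        (w - ∑ l, algebraMap k K (c l) * u x l) = 0 ∨
          0 < C.v x (w - ∑ l, algebraMap k K (c l) * u x l))
    (a : (x : C.Pt) → Fin L → ℕ → Fin (C.deg x) → k)
    (ha : ∀ (x : C.Pt) (i : Fin L) (J : ℕ),
      ((b i : K) * g x - ∑ j ∈ Finset.range J,
          (∑ l, algebraMap k K (a x i j l) * u x l) *
            q x ^ ((j : ℤ) - D₀ x + C.v x (g x)) = 0) ∨
        (J : ℤ) - D₀ x + C.v x (g x) ≤
          C.v x ((b i : K) * g x - ∑ j ∈ Finset.range J,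
            (∑ l, algebraMap k K (a x i j l) * u x l) *
              q x ^ ((j : ℤ) - D₀ x + C.v x (g x))))
    (n : ℕ) (x : Fin n → C.Pt) (hx : Function.Injective x)
    (m : Fin n → ℕ) (hm : ∀ j, 0 < m j)
    (D : C.Pt →₀ ℤ) (hD : ∀ j, D (x j) = (m j : ℤ))
    (hD0 : ∀ y : C.Pt, (∀ j, y ≠ x j) → D y = 0)
    (A : Matrix (Fin L) ((j : Fin n) × (Fin (m j) × Fin (C.deg (x j)))) k)
    (hA : ∀ i jrl, A i jrl = a (x jrl.1) i (jrl.2.1 : ℕ) jrl.2.2) :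
    (∀ c : Fin L → k,
      (∑ i, algebraMap k K (c i) * (b i : K)) ∈ C.RR (D₀ - D) ↔
        Matrix.vecMul c A = 0) ∧
      Module.finrank k (C.RR (D₀ - D)) = L - A.rank := by
  classical
  set F : (Fin L → k) → K := fun c => ∑ i, algebraMap k K (c i) * (b i : K) with hF
  have hF_mem : ∀ c, F c ∈ C.RR D₀ := by
    intro c
    simp only [hF]
    refine Submodule.sum_mem _ fun i _ => ?_
    rw [← Algebra.smul_def]
    exact Submodule.smul_mem _ _ (b i).2
  -- Lemma A: linear combination of the expansions
  have lemA : ∀ (c : Fin L → k) (y : C.Pt) (J : ℕ),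
      (F c * g y - ∑ j ∈ Finset.range J,
        (∑ l, algebraMap k K (∑ i, c i * a y i j l) * u y l) *
          q y ^ ((j : ℤ) - D₀ y + C.v y (g y))) = 0 ∨
      (J : ℤ) - D₀ y + C.v y (g y) ≤
        C.v y (F c * g y - ∑ j ∈ Finset.range J,
          (∑ l, algebraMap k K (∑ i, c i * a y i j l) * u y l) *
            q y ^ ((j : ℤ) - D₀ y + C.v y (g y))) := by
    intro c y J
    have heq : F c * g y - ∑ j ∈ Finset.range J,
        (∑ l, algebraMap k K (∑ i, c i * a y i j l) * u y l) *
          q y ^ ((j : ℤ) - D₀ y + C.v y (g y)) =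
        ∑ i, algebraMap k K (c i) * ((b i : K) * g y - ∑ j ∈ Finset.range J,
          (∑ l, algebraMap k K (a y i j l) * u y l) *
            q y ^ ((j : ℤ) - D₀ y + C.v y (g y))) := by
      have hterm : ∀ j ∈ Finset.range J,
          (∑ l, algebraMap k K (∑ i, c i * a y i j l) * u y l) *
            q y ^ ((j : ℤ) - D₀ y + C.v y (g y)) =
          ∑ i, algebraMap k K (c i) * ((∑ l, algebraMap k K (a y i j l) * u y l) *
            q y ^ ((j : ℤ) - D₀ y + C.v y (g y))) := by
        intro j _
        calc (∑ l, algebraMap k K (∑ i, c i * a y i j l) * u y l) *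
              q y ^ ((j : ℤ) - D₀ y + C.v y (g y))
            = (∑ l, ∑ i, (algebraMap k K (c i) * algebraMap k K (a y i j l)) * u y l) *
              q y ^ ((j : ℤ) - D₀ y + C.v y (g y)) := by
              congr 1
              refine Finset.sum_congr rfl fun l _ => ?_
              rw [map_sum, Finset.sum_mul]
              exact Finset.sum_congr rfl fun i _ => by rw [map_mul]
          _ = (∑ i, ∑ l, (algebraMap k K (c i) * algebraMap k K (a y i j l)) * u y l) *
              q y ^ ((j : ℤ) - D₀ y + C.v y (g y)) := by rw [Finset.sum_comm]
          _ = ∑ i, (∑ l, (algebraMap k K (c i) * algebraMap k K (a y i j l)) * u y l) *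
              q y ^ ((j : ℤ) - D₀ y + C.v y (g y)) := by rw [Finset.sum_mul]
          _ = ∑ i, algebraMap k K (c i) * ((∑ l, algebraMap k K (a y i j l) * u y l) *
              q y ^ ((j : ℤ) - D₀ y + C.v y (g y))) := by
              refine Finset.sum_congr rfl fun i _ => ?_
              rw [← mul_assoc]
              congr 1
              rw [Finset.mul_sum]
              exact Finset.sum_congr rfl fun l _ => by rw [mul_assoc]
      rw [Finset.sum_congr rfl hterm, Finset.sum_comm]
      have hfg' : F c * g y = ∑ i, algebraMap k K (c i) * ((b i : K) * g y) := by
        simp only [hF]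
        rw [Finset.sum_mul]
        exact Finset.sum_congr rfl fun i _ => by rw [mul_assoc]
      rw [hfg', ← Finset.sum_sub_distrib]
      refine Finset.sum_congr rfl fun i _ => ?_
      rw [mul_sub, Finset.mul_sum]
    rw [heq]
    exact C.P_sum y Finset.univ _ (fun i _ => C.P_smul y (c i) (ha y i J))
  -- key per-point characterization
  have key : ∀ (c : Fin L → k) (y : C.Pt) (M : ℕ),
      (F c = 0 ∨ (M : ℤ) - D₀ y ≤ C.v y (F c)) ↔
        (∀ j' < M, ∀ l, ∑ i, c i * a y i j' l = 0) := by
    intro c y M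
    constructor
    · intro hmem j'
      induction j' using Nat.strong_induction_on with
      | _ j' IH =>
      intro hj' l
      have hzero : ∀ jj ∈ Finset.range j',
          (∑ l, algebraMap k K (∑ i, c i * a y i jj l) * u y l) *
            q y ^ ((jj : ℤ) - D₀ y + C.v y (g y)) = 0 := by
        intro jj hjj
        have h0 : ∀ l, (∑ i, c i * a y i jj l) = 0 :=
          IH jj (Finset.mem_range.1 hjj) (lt_trans (Finset.mem_range.1 hjj) hj')
        simp [h0]
      have hA1 := lemA c y (j' + 1)
      rw [Finset.sum_range_succ, Finset.sum_eq_zero hzero, zero_add] at hA1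
      have hfg : F c * g y = 0 ∨
          ((j' + 1 : ℕ) : ℤ) - D₀ y + C.v y (g y) ≤ C.v y (F c * g y) := by
        by_cases h0 : F c = 0
        · left; rw [h0, zero_mul]
        · right
          have hv := hmem.resolve_left h0
          rw [C.v_mul y _ _ h0 (hg y)]
          have h2 : ((j' + 1 : ℕ) : ℤ) ≤ (M : ℤ) := by exact_mod_cast hj'
          omega
      have hT := C.P_sub y hfg hA1
      rw [sub_sub_cancel] at hT
      have hw : (∑ l, algebraMap k K (∑ i, c i * a y i j' l) * u y l) = 0 ∨
          0 < C.v y (∑ l, algebraMap k K (∑ i, c i * a y i j' l) * u y l) := by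
        have hqne : q y ^ ((j' : ℤ) - D₀ y + C.v y (g y)) ≠ 0 :=
          zpow_ne_zero _ (hq y).1
        rcases hT with h0 | hv
        · left; exact (mul_eq_zero.1 h0).resolve_right hqne
        · by_cases hw0 : (∑ l, algebraMap k K (∑ i, c i * a y i j' l) * u y l) = 0
          · left; exact hw0
          · right
            rw [C.v_mul y _ _ hw0 hqne,
              C.v_zpow y (hq y).1, (hq y).2, mul_one] at hv
            have h2 : ((j' + 1 : ℕ) : ℤ) = (j' : ℤ) + 1 := by push_cast; ring
            omega
      exact hu_indep y (fun l => ∑ i, c i * a y i j' l) hw l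
    · intro hcoef
      have hA := lemA c y M
      have hsum0 : (∑ j ∈ Finset.range M,
          (∑ l, algebraMap k K (∑ i, c i * a y i j l) * u y l) *
            q y ^ ((j : ℤ) - D₀ y + C.v y (g y))) = 0 := by
        refine Finset.sum_eq_zero fun jj hjj => ?_
        have h0 := hcoef jj (Finset.mem_range.1 hjj)
        simp [h0]
      rw [hsum0, sub_zero] at hA
      rcases hA with h0 | hv
      · left; exact (mul_eq_zero.1 h0).resolve_right (hg y)
      · by_cases h0 : F c = 0
        · left; exact h0
        · right
          rw [C.v_mul y _ _ h0 (hg y)] at hv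
          omega
  -- characterization of vecMul = 0
  have hAeq : ∀ c : Fin L → k, Matrix.vecMul c A = 0 ↔
      ∀ (jj : Fin n), ∀ r < m jj, ∀ l : Fin (C.deg (x jj)),
        ∑ i, c i * a (x jj) i r l = 0 := by
    intro c
    constructor
    · intro h0 jj r hr l
      have := congrFun h0 ⟨jj, ⟨⟨r, hr⟩, l⟩⟩
      simpa [Matrix.vecMul, dotProduct, hA] using this
    · intro h
      funext jrl
      obtain ⟨jj, r, l⟩ := jrl
      simpa [Matrix.vecMul, dotProduct, hA] using h jj r r.2 l
  -- Part 1
  have part1 : ∀ c : Fin L → k, (F c ∈ C.RR (D₀ - D) ↔ Matrix.vecMul c A = 0) := by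
    intro c
    rw [C.mem_RR, hAeq c]
    constructor
    · intro hmem jj r hr l
      have hstep : F c = 0 ∨ (m jj : ℤ) - D₀ (x jj) ≤ C.v (x jj) (F c) := by
        rcases hmem with h0 | hv
        · exact Or.inl h0
        · right
          have h1 := hv (x jj)
          rw [Finsupp.coe_sub, Pi.sub_apply, hD jj] at h1
          omega
      exact (key c (x jj) (m jj)).1 hstep r hr l
    · intro h
      by_cases h0 : F c = 0
      · exact Or.inl h0
      right
      intro y
      rw [Finsupp.coe_sub, Pi.sub_apply]
      by_cases hy : ∃ jj, y = x jj
      · obtain ⟨jj, rfl⟩ := hy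
        have hv := ((key c (x jj) (m jj)).2 (fun r hr l => h jj r hr l)).resolve_left h0
        rw [hD jj]
        omega
      · push_neg at hy
        rw [hD0 y hy, sub_zero]
        have hv := ((C.mem_RR D₀ (F c)).1 (hF_mem c)).resolve_left h0
        exact hv y
  refine ⟨part1, ?_⟩
  -- Part 2: dimension count
  set φ := Matrix.mulVecLin A.transpose with hφ
  set ψ : (Fin L → k) →ₗ[k] K :=
    (C.RR D₀).subtype ∘ₗ (b.equivFun.symm : (Fin L → k) ≃ₗ[k] C.RR D₀).toLinearMap with hψdef
  have hψ : ∀ c, ψ c = F c := by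
    intro c
    simp [hψdef, Module.Basis.equivFun_symm_apply, hF, Algebra.smul_def]
  have hker : Submodule.comap ψ (C.RR (D₀ - D)) = LinearMap.ker φ := by
    ext c
    rw [Submodule.mem_comap, hψ, part1 c, LinearMap.mem_ker, hφ,
      Matrix.mulVecLin_apply, Matrix.mulVec_transpose]
  have hinj : Function.Injective ψ := by
    rw [hψdef]
    exact (C.RR D₀).injective_subtype.comp b.equivFun.symm.injective
  have hle : C.RR (D₀ - D) ≤ C.RR D₀ := by
    intro f hf
    rw [C.mem_RR] at hf ⊢
    rcases hf with h0 | hv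
    · exact Or.inl h0
    · right
      intro y
      have h1 := hv y
      rw [Finsupp.coe_sub, Pi.sub_apply] at h1
      have hDy : 0 ≤ D y := by
        by_cases hy : ∃ jj, y = x jj
        · obtain ⟨jj, rfl⟩ := hy
          rw [hD jj]
          positivity
        · push_neg at hy
          rw [hD0 y hy]
      omega
  have hrange : C.RR (D₀ - D) ≤ LinearMap.range ψ := by
    have hr : LinearMap.range ψ = C.RR D₀ := by
      rw [hψdef, LinearMap.range_comp, LinearEquiv.range, Submodule.map_top,
        Submodule.range_subtype]
    rw [hr]
    exact hle
  have hfr1 : Module.finrank k (C.RR (D₀ - D)) = Module.finrank k (LinearMap.ker φ) := by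
    rw [← hker]
    have e := Submodule.equivMapOfInjective ψ hinj (Submodule.comap ψ (C.RR (D₀ - D)))
    have hmc : Submodule.map ψ (Submodule.comap ψ (C.RR (D₀ - D))) = C.RR (D₀ - D) := by
      rw [Submodule.map_comap_eq, inf_eq_right.2 hrange]
    rw [hmc] at e
    exact e.symm.finrank_eq
  have hrn := LinearMap.finrank_range_add_finrank_ker φ
  have hL' : Module.finrank k (Fin L → k) = L := Module.finrank_fin_fun k
  have hrank : Module.finrank k (LinearMap.range φ) = A.rank := by
    rw [hφ]
    have h1 : A.transpose.rank = Module.finrank k (LinearMap.range A.transpose.mulVecLin) := rfl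
    rw [← h1, Matrix.rank_transpose]
  rw [hfr1]
  omega
end

section
/- Let f ∈ k(X)^× be a nonzero function. Let g ∈ k[t] be the denominator of f with respect to O_0, that is, the minimal nonzero polynomial g ∈ k[t] such that fg ∈ O_0, and let h ∈ k[t] be a generator of the ideal k[t] ∩ f g O_0. Let D_g and D_h be the zero divisors of g and h on P^1 respectively. Then {π(x) : x ∈ Supp(div(f)), π(x) ≠ ∞} = Supp(D_g) ∪ Supp(D_h). In particular, div(f) is supported on the set {x ∈ X : π(x) ∈ Supp(D_g) ∪ Supp(D_h) ∪ {∞}}. -/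
/-- Let `f ∈ k(X)ˣ` be a nonzero function. Let `g ∈ k[t]` be
the denominator of `f` with respect to `O_0` (the minimal nonzero polynomial
with `fg ∈ O_0`, where `O_0` is the integral closure of `k[t]` in the function
field `K = k(X)`), and let `h ∈ k[t]` be a generator of the ideal
`k[t] ∩ f g O_0`. Let `D_g` and `D_h` be the zero divisors of `g` and `h` on
`P¹`. Then `{π(x) : x ∈ Supp(div f), π(x) ≠ ∞} = Supp(D_g) ∪ Supp(D_h)`.
In particular, `div(f)` is supported on
`{x ∈ X : π(x) ∈ Supp(D_g) ∪ Supp(D_h) ∪ {∞}}`.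

The closed points of `X` are abstracted as a type `Pt` carrying the normalized
valuations `v x` on `K`; the finite closed points of `P¹` are identified with
(associate classes of) irreducible polynomials `p ∈ k[t]`, a point `x` lies
over the point cut out by `p` exactly when `v x p > 0`, and `π(x) = ∞` exactly
when `v x t < 0`. Membership of a finite point of `P¹` in `Supp(D_g)` is then
divisibility `p ∣ g`. The first asserted set equality is accordingly expressed
as an equality of sets of irreducible polynomials. -/
theorem statement6 {k K : Type*} [Field k] [Field K] [Algebra (Polynomial k) K]
    (halg : Function.Injective (algebraMap (Polynomial k) K))
    (Pt : Type*) (v : Pt → K → ℤ)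
    (hv_mul : ∀ x (a b : K), a ≠ 0 → b ≠ 0 → v x (a * b) = v x a + v x b)
    (hv_add : ∀ x (a b : K), a ≠ 0 → b ≠ 0 → a + b ≠ 0 → min (v x a) (v x b) ≤ v x (a + b))
    (hv_const : ∀ x (c : k), c ≠ 0 → v x (algebraMap (Polynomial k) K (Polynomial.C c)) = 0)
    (hv_finite : ∀ a : K, a ≠ 0 → {x | v x a ≠ 0}.Finite)
    (hO0 : ∀ a : K, a ∈ integralClosure (Polynomial k) K ↔
      ∀ x, 0 ≤ v x (algebraMap (Polynomial k) K Polynomial.X) → 0 ≤ v x a)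
    (hπ_surj : ∀ p : Polynomial k, Irreducible p →
      ∃ x, 0 < v x (algebraMap (Polynomial k) K p))
    (f : K) (hf : f ≠ 0)
    (g : Polynomial k) (hg : g ≠ 0)
    (hfg : f * algebraMap (Polynomial k) K g ∈ integralClosure (Polynomial k) K)
    (hg_min : ∀ g' : Polynomial k, g' ≠ 0 →
      f * algebraMap (Polynomial k) K g' ∈ integralClosure (Polynomial k) K → g ∣ g')
    (h : Polynomial k) (hh : h ≠ 0)
    (hh_mem : ∃ a ∈ integralClosure (Polynomial k) K,
      algebraMap (Polynomial k) K h = f * algebraMap (Polynomial k) K g * a)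
    (hh_gen : ∀ h' : Polynomial k,
      (∃ a ∈ integralClosure (Polynomial k) K,
        algebraMap (Polynomial k) K h' = f * algebraMap (Polynomial k) K g * a) → h ∣ h') :
    ({p : Polynomial k | Irreducible p ∧
        ∃ x, v x f ≠ 0 ∧ 0 < v x (algebraMap (Polynomial k) K p)} =
      {p : Polynomial k | Irreducible p ∧ p ∣ g} ∪
        {p : Polynomial k | Irreducible p ∧ p ∣ h}) ∧
      ∀ x, v x f ≠ 0 →
        v x (algebraMap (Polynomial k) K Polynomial.X) < 0 ∨
          ∃ p : Polynomial k, Irreducible p ∧ (p ∣ g ∨ p ∣ h) ∧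
            0 < v x (algebraMap (Polynomial k) K p) := by
  classical
  set φ := algebraMap (Polynomial k) K with hφdef
  have hφ : ∀ p : Polynomial k, p ≠ 0 → φ p ≠ 0 := fun p hp =>
    (map_ne_zero_iff φ halg).mpr hp
  -- basic valuation facts
  have hv1 : ∀ x, v x (1 : K) = 0 := by
    intro x
    have := hv_const x 1 one_ne_zero
    simpa using this
  have hvneg : ∀ x (a : K), a ≠ 0 → v x (-a) = v x a := by
    intro x a ha
    have hC : φ (Polynomial.C (-1 : k)) = (-1 : K) := by simp
    have h1 : v x ((-1 : K) * a) = v x (-1 : K) + v x a :=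
      hv_mul x _ a (by simp) ha
    have h2 : v x (-1 : K) = 0 := by rw [← hC]; exact hv_const x (-1) (by simp)
    simpa [h2] using h1
  have hvmin : ∀ x (a b : K), a ≠ 0 → b ≠ 0 → v x a < v x b → v x (a + b) = v x a := by
    intro x a b ha hb hlt
    have hab : a + b ≠ 0 := by
      intro h0
      have : b = -a := by linear_combination h0
      rw [this, hvneg x a ha] at hlt; exact lt_irrefl _ hlt
    have h1 : min (v x a) (v x b) ≤ v x (a + b) := hv_add x a b ha hb hab
    have h1' : v x a ≤ v x (a + b) := le_trans (le_of_eq (min_eq_left hlt.le).symm) h1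
    have h2 : v x (a + b) ≤ v x a := by
      by_contra hcon
      push_neg at hcon
      have h3 : min (v x (a + b)) (v x (-b)) ≤ v x (a + b + -b) :=
        hv_add x _ _ hab (neg_ne_zero.mpr hb) (by simpa using ha)
      rw [hvneg x b hb] at h3
      have h4 : v x (a + b + -b) = v x a := by ring_nf
      rw [h4] at h3
      have : v x a < min (v x (a + b)) (v x b) := lt_min hcon hlt
      omega
    omega
  -- finiteness: at finite points, polynomials have nonnegative valuation
  have hfin : ∀ x, 0 ≤ v x (φ Polynomial.X) → ∀ p : Polynomial k, 0 ≤ v x (φ p) := by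
    intro x hx p
    exact (hO0 (φ p)).mp (Subalgebra.algebraMap_mem _ p) x hx
  -- uniqueness of prime over a finite point
  have hunique : ∀ x, 0 ≤ v x (φ Polynomial.X) → ∀ p q : Polynomial k, Irreducible p →
      Irreducible q → 0 < v x (φ p) → 0 < v x (φ q) → p ∣ q := by
    intro x hx p q hp hq hvp hvq
    by_contra hnd
    obtain ⟨a, b, hab⟩ := hp.coprime_iff_not_dvd.mpr hnd
    have ha : a ≠ 0 := by
      rintro rfl; rw [zero_mul, zero_add] at hab
      exact hq.not_isUnit (IsUnit.of_mul_eq_one _ (by rw [mul_comm]; exact hab))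
    have hb : b ≠ 0 := by
      rintro rfl; rw [zero_mul, add_zero] at hab
      exact hp.not_isUnit (IsUnit.of_mul_eq_one _ (by rw [mul_comm]; exact hab))
    have habK : φ a * φ p + φ b * φ q = 1 := by
      rw [← map_mul, ← map_mul, ← map_add, hab, map_one]
    have h1 : 0 < v x (φ a * φ p) := by
      rw [hv_mul x _ _ (hφ a ha) (hφ p hp.ne_zero)]
      have := hfin x hx a
      omega
    have h2 : 0 < v x (φ b * φ q) := by
      rw [hv_mul x _ _ (hφ b hb) (hφ q hq.ne_zero)]
      have := hfin x hx b
      omega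
    have h3 : min (v x (φ a * φ p)) (v x (φ b * φ q)) ≤ v x (φ a * φ p + φ b * φ q) :=
      hv_add x _ _ (mul_ne_zero (hφ a ha) (hφ p hp.ne_zero))
        (mul_ne_zero (hφ b hb) (hφ q hq.ne_zero)) (by rw [habK]; exact one_ne_zero)
    rw [habK, hv1] at h3
    omega
  -- extracting an irreducible factor with positive valuation
  have hfactor : ∀ x, 0 ≤ v x (φ Polynomial.X) → ∀ q : Polynomial k, q ≠ 0 →
      0 < v x (φ q) → ∃ p : Polynomial k, Irreducible p ∧ p ∣ q ∧ 0 < v x (φ p) := by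
    intro x hx q
    induction q using UniqueFactorizationMonoid.induction_on_prime with
    | h₁ => intro hq0 _; exact absurd rfl hq0
    | h₂ u hu =>
        intro _ hvu
        obtain ⟨c, hc, rfl⟩ := Polynomial.isUnit_iff.mp hu
        rw [hv_const x c (by rintro rfl; simp at hc)] at hvu
        omega
    | h₃ a p ha hp ih =>
        intro _ hv
        rw [map_mul, hv_mul x _ _ (hφ p hp.ne_zero) (hφ a ha)] at hv
        rcases lt_or_ge 0 (v x (φ p)) with hcase | hcase
        · exact ⟨p, hp.irreducible, dvd_mul_right _ _, hcase⟩
        · have hva : 0 < v x (φ a) := by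
            have := hfin x hx p; omega
          obtain ⟨p', hp', hdvd, hv'⟩ := ih ha hva
          exact ⟨p', hp', hdvd.trans (dvd_mul_left _ _), hv'⟩
  -- at infinite points, nonconstant polynomials have negative valuation
  have hdeg : ∀ x, v x (φ Polynomial.X) < 0 → ∀ n : ℕ, ∀ p : Polynomial k, p ≠ 0 →
      p.natDegree = n → v x (φ p) = (n : ℤ) * v x (φ Polynomial.X) := by
    intro x hx n
    induction n with
    | zero =>
        intro p hp hdeg
        obtain ⟨c, rfl⟩ : ∃ c, p = Polynomial.C c :=
          ⟨p.coeff 0, (Polynomial.eq_C_of_natDegree_eq_zero hdeg)⟩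
        rw [hv_const x c (by rintro rfl; simp at hp)]
        simp
    | succ n ih =>
        intro p hp hdeg
        have hq0 : p.divX ≠ 0 := by
          rw [Ne, Polynomial.divX_eq_zero_iff]
          intro hcon
          rw [hcon] at hdeg
          simp [Polynomial.natDegree_C] at hdeg
        have hqdeg : p.divX.natDegree = n := by
          rw [Polynomial.natDegree_divX_eq_natDegree_tsub_one, hdeg]
          omega
        have hqv : v x (φ p.divX) = (n : ℤ) * v x (φ Polynomial.X) := ih p.divX hq0 hqdeg
        have hXq : v x (φ (p.divX * Polynomial.X)) = ((n : ℤ) + 1) * v x (φ Polynomial.X) := by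
          rw [map_mul, hv_mul x _ _ (hφ _ hq0) (hφ _ Polynomial.X_ne_zero), hqv]
          ring
        have hrepr : p.divX * Polynomial.X + Polynomial.C (p.coeff 0) = p :=
          Polynomial.divX_mul_X_add p
        by_cases hc0 : p.coeff 0 = 0
        · rw [hc0, map_zero, add_zero] at hrepr
          rw [← hrepr]
          push_cast
          rw [hXq]
        · have hvC : v x (φ (Polynomial.C (p.coeff 0))) = 0 := hv_const x _ hc0
          have hlt : v x (φ (p.divX * Polynomial.X)) < v x (φ (Polynomial.C (p.coeff 0))) := by
            rw [hvC, hXq]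
            have : (0:ℤ) < (n : ℤ) + 1 := by positivity
            exact mul_neg_of_pos_of_neg this hx
          have := hvmin x _ _ (hφ _ (mul_ne_zero hq0 Polynomial.X_ne_zero))
            (hφ _ (by simpa using hc0)) hlt
          rw [← map_add, hrepr] at this
          rw [this, hXq]
          push_cast
          ring
  have hinfinite : ∀ x (p : Polynomial k), Irreducible p → 0 < v x (φ p) →
      0 ≤ v x (φ Polynomial.X) := by
    intro x p hp hvp
    by_contra hcon
    push_neg at hcon
    have := hdeg x hcon p.natDegree p hp.ne_zero rfl
    have hd : 0 < p.natDegree := hp.natDegree_pos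
    have : v x (φ p) < 0 := by
      rw [this]
      exact mul_neg_of_pos_of_neg (by exact_mod_cast hd) hcon
    omega
  -- the element u = f * g
  set u : K := f * φ g with hudef
  have hu0 : u ≠ 0 := mul_ne_zero hf (hφ g hg)
  have hux : ∀ x, 0 ≤ v x (φ Polynomial.X) → 0 ≤ v x u := fun x hx =>
    (hO0 u).mp hfg x hx
  have huval : ∀ x, v x u = v x f + v x (φ g) := fun x =>
    hv_mul x f (φ g) hf (hφ g hg)
  obtain ⟨a₀, ha₀O, ha₀eq⟩ := hh_mem
  have ha₀0 : a₀ ≠ 0 := by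
    intro h0
    rw [h0, mul_zero] at ha₀eq
    exact hφ h hh ha₀eq
  -- Lemma G
  have lemG : ∀ p : Polynomial k, Irreducible p → p ∣ g →
      ∃ x, v x f ≠ 0 ∧ 0 < v x (φ p) := by
    intro p hp ⟨g', hg'⟩
    have hg'0 : g' ≠ 0 := by rintro rfl; rw [mul_zero] at hg'; exact hg hg'
    have hnot : f * φ g' ∉ integralClosure (Polynomial k) K := by
      intro hmem
      obtain ⟨c, hc⟩ := hg_min g' hg'0 hmem
      have h1 : g' * 1 = g' * (p * c) := by linear_combination hc + c * hg'
      exact hp.not_isUnit (IsUnit.of_mul_eq_one _ (mul_left_cancel₀ hg'0 h1).symm)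
    rw [hO0] at hnot
    push_neg at hnot
    obtain ⟨x, hx, hneg⟩ := hnot
    have hneg' : v x f + v x (φ g') < 0 := by
      rw [← hv_mul x f (φ g') hf (hφ g' hg'0)]; omega
    have hvg' : 0 ≤ v x (φ g') := hfin x hx g'
    have hvf : v x f < 0 := by omega
    have hvg : v x (φ g) = v x (φ p) + v x (φ g') := by
      rw [hg', map_mul]; exact hv_mul x _ _ (hφ p hp.ne_zero) (hφ g' hg'0)
    have h1 : 0 ≤ v x u := hux x hx
    rw [huval, hvg] at h1
    exact ⟨x, by omega, by omega⟩
  -- Lemma H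
  have lemH : ∀ p : Polynomial k, Irreducible p → p ∣ h →
      ∃ x, v x f ≠ 0 ∧ 0 < v x (φ p) := by
    intro p hp ⟨h', hh'⟩
    have hh'0 : h' ≠ 0 := by rintro rfl; rw [mul_zero] at hh'; exact hh hh'
    -- step 1: find x with v x p > 0 and v x u > 0
    have step1 : ∃ x, 0 ≤ v x (φ Polynomial.X) ∧ 0 < v x (φ p) ∧ 0 < v x u := by
      by_contra hcon
      push_neg at hcon
      have hmem : a₀ / φ p ∈ integralClosure (Polynomial k) K := by
        rw [hO0]
        intro x hx
        have hdiv : v x (a₀ / φ p) = v x a₀ - v x (φ p) := by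
          rw [div_eq_mul_inv, hv_mul x a₀ (φ p)⁻¹ ha₀0 (inv_ne_zero (hφ p hp.ne_zero))]
          have hinv : v x (φ p)⁻¹ = - v x (φ p) := by
            have := hv_mul x (φ p) (φ p)⁻¹ (hφ p hp.ne_zero) (inv_ne_zero (hφ p hp.ne_zero))
            rw [mul_inv_cancel₀ (hφ p hp.ne_zero), hv1] at this
            omega
          omega
        rw [hdiv]
        have hva₀ : 0 ≤ v x a₀ := (hO0 a₀).mp ha₀O x hx
        rcases lt_or_ge 0 (v x (φ p)) with hvp | hvp
        · have hvu : v x u ≤ 0 := hcon x hx hvp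
          have hvu0 : v x u = 0 := le_antisymm hvu (hux x hx)
          have hva : v x a₀ = v x (φ h) := by
            rw [ha₀eq, hv_mul x u a₀ hu0 ha₀0, hvu0]; omega
          have hvh : v x (φ h) = v x (φ p) + v x (φ h') := by
            rw [hh', map_mul]; exact hv_mul x _ _ (hφ p hp.ne_zero) (hφ h' hh'0)
          have := hfin x hx h'
          omega
        · omega
      have hgen : ∃ a ∈ integralClosure (Polynomial k) K, φ h' = f * φ g * a := by
        refine ⟨a₀ / φ p, hmem, ?_⟩
        have hp0 : φ p ≠ 0 := hφ p hp.ne_zero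
        rw [← hudef, ← mul_div_assoc, eq_div_iff hp0, ← ha₀eq, ← map_mul, mul_comm h' p, ← hh']
      obtain ⟨c, hc⟩ := hh_gen h' hgen
      have h1 : h' * 1 = h' * (p * c) := by linear_combination hc + c * hh'
      exact hp.not_isUnit (IsUnit.of_mul_eq_one _ (mul_left_cancel₀ hh'0 h1).symm)
    obtain ⟨x, hx, hvp, hvu⟩ := step1
    by_cases hvf : v x f = 0
    · have hvg : 0 < v x (φ g) := by rw [huval] at hvu; omega
      obtain ⟨q, hq, hqg, hvq⟩ := hfactor x hx g hg hvg
      have hpq : p ∣ q := hunique x hx p q hp hq hvp hvq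
      exact lemG p hp (hpq.trans hqg)
    · exact ⟨x, hvf, hvp⟩
  -- Lemma F
  have lemF : ∀ x, v x f ≠ 0 → 0 ≤ v x (φ Polynomial.X) →
      ∃ p : Polynomial k, Irreducible p ∧ (p ∣ g ∨ p ∣ h) ∧ 0 < v x (φ p) := by
    intro x hvf hx
    rcases lt_or_gt_of_ne hvf with hneg | hpos
    · have hvg : 0 < v x (φ g) := by
        have := hux x hx; rw [huval] at this; omega
      obtain ⟨p, hp, hpg, hvp⟩ := hfactor x hx g hg hvg
      exact ⟨p, hp, Or.inl hpg, hvp⟩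
    · have hvh : 0 < v x (φ h) := by
        have hva₀ : 0 ≤ v x a₀ := (hO0 a₀).mp ha₀O x hx
        have hvg : 0 ≤ v x (φ g) := hfin x hx g
        rw [ha₀eq, hv_mul x _ a₀ hu0 ha₀0, huval]
        omega
      obtain ⟨p, hp, hph, hvp⟩ := hfactor x hx h hh hvh
      exact ⟨p, hp, Or.inr hph, hvp⟩
  constructor
  · ext p
    simp only [Set.mem_setOf_eq, Set.mem_union]
    constructor
    · rintro ⟨hp, x, hvf, hvp⟩
      have hx : 0 ≤ v x (φ Polynomial.X) := hinfinite x p hp hvp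
      obtain ⟨q, hq, hqgh, hvq⟩ := lemF x hvf hx
      have hpq : p ∣ q := hunique x hx p q hp hq hvp hvq
      rcases hqgh with hqg | hqh
      · exact Or.inl ⟨hp, hpq.trans hqg⟩
      · exact Or.inr ⟨hp, hpq.trans hqh⟩
    · rintro (⟨hp, hpg⟩ | ⟨hp, hph⟩)
      · exact ⟨hp, lemG p hp hpg⟩
      · exact ⟨hp, lemH p hp hph⟩
  · intro x hvf
    by_cases hx : v x (φ Polynomial.X) < 0
    · exact Or.inl hx
    · exact Or.inr (lemF x hvf (not_lt.mp hx))
end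

section
/- Let f ∈ k(X)^× be a nonzero function, let g ∈ k[t] be the denominator of f with respect to O_0 (the minimal nonzero polynomial with fg ∈ O_0), and let h ∈ k[t] be a generator of the ideal k[t] ∩ f g O_0. Then every closed point y of P^1 in the support of the zero divisor of g or of the zero divisor of h satisfies y = π(x) for some closed point x ∈ X in the support of div(f); more precisely, if y is a zero of g then there exists x above y with v_x(f) < 0, and if y is a zero of h but not of g then there exists x above y with v_x(f) > 0. -/
/-- Let `f ∈ k(X)ˣ` be a nonzero function, let `g ∈ k[t]` be
the denominator of `f` with respect to `O_0` (the minimal nonzero polynomial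
with `fg ∈ O_0`, where `O_0` is the integral closure of `k[t]` in the function
field `K = k(X)`), and let `h ∈ k[t]` be a generator of the ideal
`k[t] ∩ f g O_0`. Then every closed point `y` of `P¹` in the support of the
zero divisor of `g` or of the zero divisor of `h` satisfies `y = π(x)` for some
closed point `x ∈ X` in the support of `div(f)`; more precisely, if `y` is a
zero of `g` then there exists `x` above `y` with `v_x(f) < 0`, and if `y` is a
zero of `h` but not of `g` then there exists `x` above `y` with `v_x(f) > 0`.

The closed points of `X` are abstracted as a type `Pt` carrying the normalized
valuations `v x` on `K`; the finite closed points of `P¹` are identified with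
(associate classes of) irreducible polynomials `p ∈ k[t]`, and a point `x` lies
over the point cut out by `p` exactly when `v x p > 0`; membership of that
point in the support of the zero divisor of `g` is divisibility `p ∣ g`. -/
theorem statement9 {k K : Type*} [Field k] [Field K] [Algebra (Polynomial k) K]
    (halg : Function.Injective (algebraMap (Polynomial k) K))
    (Pt : Type*) (v : Pt → K → ℤ)
    (hv_mul : ∀ x (a b : K), a ≠ 0 → b ≠ 0 → v x (a * b) = v x a + v x b)
    (hv_add : ∀ x (a b : K), a ≠ 0 → b ≠ 0 → a + b ≠ 0 → min (v x a) (v x b) ≤ v x (a + b))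
    (hv_const : ∀ x (c : k), c ≠ 0 → v x (algebraMap (Polynomial k) K (Polynomial.C c)) = 0)
    (hv_finite : ∀ a : K, a ≠ 0 → {x | v x a ≠ 0}.Finite)
    (hO0 : ∀ a : K, a ∈ integralClosure (Polynomial k) K ↔
      ∀ x, 0 ≤ v x (algebraMap (Polynomial k) K Polynomial.X) → 0 ≤ v x a)
    (hπ_surj : ∀ p : Polynomial k, Irreducible p →
      ∃ x, 0 < v x (algebraMap (Polynomial k) K p))
    (f : K) (hf : f ≠ 0)
    (g : Polynomial k) (hg : g ≠ 0)
    (hfg : f * algebraMap (Polynomial k) K g ∈ integralClosure (Polynomial k) K)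
    (hg_min : ∀ g' : Polynomial k, g' ≠ 0 →
      f * algebraMap (Polynomial k) K g' ∈ integralClosure (Polynomial k) K → g ∣ g')
    (h : Polynomial k) (hh : h ≠ 0)
    (hh_mem : ∃ a ∈ integralClosure (Polynomial k) K,
      algebraMap (Polynomial k) K h = f * algebraMap (Polynomial k) K g * a)
    (hh_gen : ∀ h' : Polynomial k,
      (∃ a ∈ integralClosure (Polynomial k) K,
        algebraMap (Polynomial k) K h' = f * algebraMap (Polynomial k) K g * a) → h ∣ h') :
    (∀ p : Polynomial k, Irreducible p → (p ∣ g ∨ p ∣ h) →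
        ∃ x, 0 < v x (algebraMap (Polynomial k) K p) ∧ v x f ≠ 0) ∧
      (∀ p : Polynomial k, Irreducible p → p ∣ g →
        ∃ x, 0 < v x (algebraMap (Polynomial k) K p) ∧ v x f < 0) ∧
      (∀ p : Polynomial k, Irreducible p → p ∣ h → ¬p ∣ g →
        ∃ x, 0 < v x (algebraMap (Polynomial k) K p) ∧ 0 < v x f) := by
  have hφ : ∀ q : Polynomial k, q ≠ 0 → algebraMap (Polynomial k) K q ≠ 0 := by
    intro q hq hq0
    exact hq (halg (by rw [hq0, map_zero]))
  have hone : ∀ x, v x (1 : K) = 0 := by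
    intro x
    have h1 := hv_const x 1 one_ne_zero
    rwa [map_one, map_one] at h1
  have hpoly : ∀ x, 0 ≤ v x (algebraMap (Polynomial k) K Polynomial.X) →
      ∀ q : Polynomial k, 0 ≤ v x (algebraMap (Polynomial k) K q) := by
    intro x hx q
    exact (hO0 _).1 (isIntegral_algebraMap) x hx
  have hcop : ∀ x, 0 ≤ v x (algebraMap (Polynomial k) K Polynomial.X) →
      ∀ p q : Polynomial k, p ≠ 0 → q ≠ 0 → IsCoprime p q →
      0 < v x (algebraMap (Polynomial k) K p) → v x (algebraMap (Polynomial k) K q) = 0 := by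
    intro x hx p q hp0 hq0 hpq hvp
    obtain ⟨u, w, huw⟩ := hpq
    refine le_antisymm ?_ (hpoly x hx q)
    by_contra hlt
    push_neg at hlt
    rcases eq_or_ne u 0 with rfl | hu
    · rw [zero_mul, zero_add] at huw
      have hw : w ≠ 0 := by rintro rfl; simp at huw
      have h1 := congrArg (algebraMap (Polynomial k) K) huw
      rw [map_mul, map_one] at h1
      have h2 := hv_mul x _ _ (hφ w hw) (hφ q hq0)
      rw [h1, hone] at h2
      have h3 := hpoly x hx w
      omega
    · rcases eq_or_ne w 0 with rfl | hw
      · rw [zero_mul, add_zero] at huw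
        have h1 := congrArg (algebraMap (Polynomial k) K) huw
        rw [map_mul, map_one] at h1
        have h2 := hv_mul x _ _ (hφ u hu) (hφ p hp0)
        rw [h1, hone] at h2
        have h3 := hpoly x hx u
        omega
      · have hsum : algebraMap (Polynomial k) K u * algebraMap (Polynomial k) K p +
            algebraMap (Polynomial k) K w * algebraMap (Polynomial k) K q = 1 := by
          rw [← map_mul, ← map_mul, ← map_add, huw, map_one]
        have hmin := hv_add x _ _ (mul_ne_zero (hφ u hu) (hφ p hp0))
          (mul_ne_zero (hφ w hw) (hφ q hq0)) (by rw [hsum]; exact one_ne_zero)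
        rw [hsum, hone, hv_mul x _ _ (hφ u hu) (hφ p hp0),
          hv_mul x _ _ (hφ w hw) (hφ q hq0)] at hmin
        have h3 := hpoly x hx u
        have h4 := hpoly x hx w
        omega
  have claim2 : ∀ p : Polynomial k, Irreducible p → p ∣ g →
      ∃ x, 0 < v x (algebraMap (Polynomial k) K p) ∧ v x f < 0 := by
    intro p hp hpg
    by_contra hcon
    push_neg at hcon
    obtain ⟨g', rfl⟩ := hpg
    have hg' : g' ≠ 0 := right_ne_zero_of_mul hg
    have hmem : f * algebraMap (Polynomial k) K g' ∈ integralClosure (Polynomial k) K := by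
      rw [hO0]
      intro x hx
      have e0 := hv_mul x f _ hf (hφ g' hg')
      rcases lt_or_ge 0 (v x (algebraMap (Polynomial k) K p)) with hvp | hvp
      · have hvf := hcon x hvp
        have h1 := hpoly x hx g'
        omega
      · have hvp0 : v x (algebraMap (Polynomial k) K p) = 0 :=
          le_antisymm hvp (hpoly x hx p)
        have hfg' := (hO0 _).1 hfg x hx
        have e1 : v x (f * algebraMap (Polynomial k) K (p * g')) =
            v x f + (v x (algebraMap (Polynomial k) K p) +
              v x (algebraMap (Polynomial k) K g')) := by
          rw [hv_mul x f _ hf (hφ _ (mul_ne_zero hp.ne_zero hg')), map_mul,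
            hv_mul x _ _ (hφ p hp.ne_zero) (hφ g' hg')]
        omega
    obtain ⟨c, hc⟩ := hg_min g' hg' hmem
    have h1 : g' * (p * c) = g' * 1 := by linear_combination -hc
    exact hp.not_isUnit (IsUnit.of_mul_eq_one c (mul_left_cancel₀ hg' h1))
  have claim3 : ∀ p : Polynomial k, Irreducible p → p ∣ h → ¬p ∣ g →
      ∃ x, 0 < v x (algebraMap (Polynomial k) K p) ∧ 0 < v x f := by
    intro p hp hph hpg
    by_contra hcon
    push_neg at hcon
    obtain ⟨a, ha, hEq⟩ := hh_mem
    obtain ⟨h', rfl⟩ := hph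
    have hh' : h' ≠ 0 := right_ne_zero_of_mul hh
    have ha0 : a ≠ 0 := by
      rintro rfl
      rw [mul_zero] at hEq
      exact hφ _ hh hEq
    set b := a / algebraMap (Polynomial k) K p with hbdef
    have hb0 : b ≠ 0 := div_ne_zero ha0 (hφ p hp.ne_zero)
    have hab : b * algebraMap (Polynomial k) K p = a :=
      div_mul_cancel₀ a (hφ p hp.ne_zero)
    have hbmem : b ∈ integralClosure (Polynomial k) K := by
      rw [hO0]
      intro x hx
      have hva : v x a = v x b + v x (algebraMap (Polynomial k) K p) := by
        rw [← hab, hv_mul x b _ hb0 (hφ p hp.ne_zero)]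
      rcases lt_or_ge 0 (v x (algebraMap (Polynomial k) K p)) with hvp | hvp
      · have hvg : v x (algebraMap (Polynomial k) K g) = 0 :=
          hcop x hx p g hp.ne_zero hg (hp.coprime_iff_not_dvd.2 hpg) hvp
        have hvf := hcon x hvp
        have e1 : v x (algebraMap (Polynomial k) K (p * h')) =
            v x f + v x (algebraMap (Polynomial k) K g) + v x a := by
          rw [hEq, hv_mul x _ a (mul_ne_zero hf (hφ g hg)) ha0,
            hv_mul x f _ hf (hφ g hg)]
        have e2 : v x (algebraMap (Polynomial k) K (p * h')) =
            v x (algebraMap (Polynomial k) K p) + v x (algebraMap (Polynomial k) K h') := by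
          rw [map_mul, hv_mul x _ _ (hφ p hp.ne_zero) (hφ h' hh')]
        have h1 := hpoly x hx h'
        omega
      · have hva' := (hO0 a).1 ha x hx
        have hvp0 : v x (algebraMap (Polynomial k) K p) = 0 :=
          le_antisymm hvp (hpoly x hx p)
        omega
    have hEq' : algebraMap (Polynomial k) K h' =
        f * algebraMap (Polynomial k) K g * b := by
      apply mul_left_cancel₀ (hφ p hp.ne_zero)
      calc algebraMap (Polynomial k) K p * algebraMap (Polynomial k) K h'
          = algebraMap (Polynomial k) K (p * h') := (map_mul _ _ _).symm
        _ = f * algebraMap (Polynomial k) K g * a := hEq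
        _ = f * algebraMap (Polynomial k) K g *
            (b * algebraMap (Polynomial k) K p) := by rw [hab]
        _ = algebraMap (Polynomial k) K p *
            (f * algebraMap (Polynomial k) K g * b) := by ring
    obtain ⟨c, hc⟩ := hh_gen h' ⟨b, hbmem, hEq'⟩
    have h1 : h' * (p * c) = h' * 1 := by linear_combination -hc
    exact hp.not_isUnit (IsUnit.of_mul_eq_one c (mul_left_cancel₀ hh' h1))
  refine ⟨?_, claim2, claim3⟩
  intro p hp hpgh
  by_cases hpg : p ∣ g
  · obtain ⟨x, hx1, hx2⟩ := claim2 p hp hpg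
    exact ⟨x, hx1, hx2.ne⟩
  · rcases hpgh with hpg' | hph
    · exact absurd hpg' hpg
    · obtain ⟨x, hx1, hx2⟩ := claim3 p hp hph hpg
      exact ⟨x, hx1, hx2.ne'⟩
end

section
/- Let n ≥ 1 and let U ⊆ Λ ⊆ Z^n be subgroups such that the quotient Z^n / Λ has rank 1 and its torsion subgroup has finite order h. Then U = Λ if and only if the quotient Z^n / U has rank 1 and the order of its torsion subgroup is strictly less than 2h. -/
/-- Let `n ≥ 1` and let `U ⊆ Λ ⊆ ℤⁿ` be subgroups such that
the quotient `ℤⁿ / Λ` has rank 1 and its torsion subgroup has finite order `h`.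
Then `U = Λ` if and only if the quotient `ℤⁿ / U` has rank 1 and the order of
its torsion subgroup is strictly less than `2h`. -/
theorem statement13 (n : ℕ) (hn : 1 ≤ n) (U L : Submodule ℤ (Fin n → ℤ)) (hUL : U ≤ L)
    (h : ℕ)
    (hLrank : Module.rank ℤ ((Fin n → ℤ) ⧸ L) = 1)
    (hLtorsfin : (Submodule.torsion ℤ ((Fin n → ℤ) ⧸ L) : Set ((Fin n → ℤ) ⧸ L)).Finite)
    (hLtors : Nat.card (Submodule.torsion ℤ ((Fin n → ℤ) ⧸ L)) = h) :
    U = L ↔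
      Module.rank ℤ ((Fin n → ℤ) ⧸ U) = 1 ∧
        Nat.card (Submodule.torsion ℤ ((Fin n → ℤ) ⧸ U)) < 2 * h := by
  have hTLfin : Finite (Submodule.torsion ℤ ((Fin n → ℤ) ⧸ L)) := hLtorsfin.to_subtype
  have hpos : 0 < h := hLtors ▸ Nat.card_pos
  constructor
  · rintro rfl
    exact ⟨hLrank, by omega⟩
  · rintro ⟨hrU, hcU⟩
    set M := Fin n → ℤ
    set K : Submodule ℤ (M ⧸ U) := L.map U.mkQ with hK
    -- third isomorphism
    let e3 : ((M ⧸ U) ⧸ K) ≃ₗ[ℤ] M ⧸ L := Submodule.quotientQuotientEquivQuotient U L hUL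
    -- rank of K is zero
    have hrq : Module.rank ℤ ((M ⧸ U) ⧸ K) = 1 := by
      rw [e3.rank_eq, hLrank]
    have hrn : Module.rank ℤ ((M ⧸ U) ⧸ K) + Module.rank ℤ K = Module.rank ℤ (M ⧸ U) :=
      Submodule.rank_quotient_add_rank K
    have hrK : Module.rank ℤ K = 0 := by
      rw [hrq, hrU] at hrn
      by_contra hne
      have h1 : (1 : Cardinal) ≤ Module.rank ℤ K := Cardinal.one_le_iff_ne_zero.mpr hne
      have : (1 : Cardinal) + 1 ≤ 1 + Module.rank ℤ K := add_le_add le_rfl h1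
      rw [hrn] at this
      norm_num at this
    have hKtors : Module.IsTorsion ℤ K := rank_eq_zero_iff_isTorsion.mp hrK
    -- K is contained in the torsion of M ⧸ U
    have hKle : K ≤ Submodule.torsion ℤ (M ⧸ U) := by
      intro x hx
      obtain ⟨a, ha⟩ := @hKtors ⟨x, hx⟩
      refine ⟨a, ?_⟩
      have := congrArg (Subtype.val) ha
      rw [Submonoid.smul_def] at this ⊢
      simpa using this
    -- the projection map
    let φ : (M ⧸ U) →ₗ[ℤ] (M ⧸ L) := e3.toLinearMap.comp K.mkQ
    have hφsurj : Function.Surjective φ := e3.surjective.comp K.mkQ_surjective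
    have hkerφ : LinearMap.ker φ = K := by
      rw [LinearMap.ker_comp, LinearEquiv.ker, Submodule.comap_bot, Submodule.ker_mkQ]
    -- φ maps torsion into torsion
    have hmap : ∀ x ∈ Submodule.torsion ℤ (M ⧸ U), φ x ∈ Submodule.torsion ℤ (M ⧸ L) := by
      rintro x ⟨a, ha⟩
      rw [Submonoid.smul_def] at ha
      exact ⟨a, by rw [Submonoid.smul_def, ← map_smul, ha, map_zero]⟩
    let φ' : (Submodule.torsion ℤ (M ⧸ U)) →ₗ[ℤ] (Submodule.torsion ℤ (M ⧸ L)) :=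
      φ.restrict hmap
    have hφ'surj : Function.Surjective φ' := by
      rintro ⟨y, a, ha⟩
      obtain ⟨x, hx⟩ := hφsurj y
      rw [Submonoid.smul_def] at ha
      have hax : (a : ℤ) • x ∈ K := by
        rw [← hkerφ]
        simp only [LinearMap.mem_ker, map_smul, hx]
        exact_mod_cast ha
      obtain ⟨b, hb⟩ := @hKtors ⟨_, hax⟩
      have hbx : (b : ℤ) • ((a : ℤ) • x) = 0 := by
        have := congrArg (Subtype.val) hb
        rw [Submonoid.smul_def] at this
        simpa using this
      have hxT : x ∈ Submodule.torsion ℤ (M ⧸ U) := by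
        refine ⟨⟨(b : ℤ) * (a : ℤ), mul_mem b.2 a.2⟩, ?_⟩
        rw [Submonoid.smul_def]
        simpa [mul_smul] using hbx
      exact ⟨⟨x, hxT⟩, Subtype.ext (by simpa [φ'] using hx)⟩
    have hkerφ' : LinearMap.ker φ' =
        K.comap (Submodule.torsion ℤ (M ⧸ U)).subtype := by
      ext ⟨x, hx⟩
      simp only [LinearMap.mem_ker, Submodule.mem_comap, Submodule.subtype_apply, ← hkerφ]
      constructor
      · intro hz
        have := congrArg (Subtype.val) hz
        simpa [φ', LinearMap.restrict_apply] using this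
      · intro hz
        exact Subtype.ext (by simpa [φ', LinearMap.restrict_apply] using hz)
    -- finiteness
    have hfinU : Finite (Submodule.torsion ℤ (M ⧸ U)) := by
      have : Module.Finite ℤ (Submodule.torsion ℤ (M ⧸ U)) := by
        infer_instance
      exact Module.finite_of_fg_torsion _ (Submodule.torsion_isTorsion)
    -- counting
    have e1 : ((Submodule.torsion ℤ (M ⧸ U)) ⧸ LinearMap.ker φ') ≃ₗ[ℤ]
        (Submodule.torsion ℤ (M ⧸ L)) := φ'.quotKerEquivOfSurjective hφ'surj
    have hcount : Nat.card (Submodule.torsion ℤ (M ⧸ U)) =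
        Nat.card (LinearMap.ker φ') * h := by
      rw [Submodule.card_eq_card_quotient_mul_card (LinearMap.ker φ'),
        Nat.card_congr e1.toEquiv, hLtors, mul_comm]
    have hcardker : Nat.card (LinearMap.ker φ') = Nat.card K := by
      rw [hkerφ']
      exact Nat.card_congr (Submodule.comapSubtypeEquivOfLe hKle).toEquiv
    have hKfin : Finite K := by
      have : Module.Finite ℤ K := by infer_instance
      exact Module.finite_of_fg_torsion _ hKtors
    have hKpos : 0 < Nat.card K := Nat.card_pos
    have hK1 : Nat.card K = 1 := by
      rw [hcount, hcardker] at hcU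
      have h2 : Nat.card ↥K < 2 := Nat.lt_of_mul_lt_mul_right hcU
      omega
    have : Subsingleton K := (Nat.card_eq_one_iff_unique.mp hK1).1
    have hKbot : K = ⊥ := by
      ext x
      simp only [Submodule.mem_bot]
      constructor
      · intro hx
        have := @Subsingleton.elim K this ⟨x, hx⟩ ⟨0, K.zero_mem⟩
        simpa using congrArg Subtype.val this
      · rintro rfl; exact K.zero_mem
    have hLU : L ≤ U := by
      intro x hx
      have : U.mkQ x ∈ K := Submodule.mem_map_of_mem hx
      rw [hKbot, Submodule.mem_bot] at this
      rwa [← Submodule.Quotient.mk_eq_zero U]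
    exact le_antisymm hUL hLU
end
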